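/- If a parametric function f : X × ℝ^m → ℝ^c satisfies the task arithmetic property around θ0 with respect to task vectors τ_1,…,τ_T and pairwise disjoint supports D_1,…,D_T (with admissible coefficient set 𝒜 = ℝ^T), then f is weight disentangled with respect to {τ_t} and {D_t}; explicitly, the functions g_t(x; α τ_t) = f(x; θ0 + α τ_t) · 1(x ∈ D_t) for t = 1,…,T and g_0(x) = f(x; θ0) · 1(x ∉ ⋃_t D_t) realize the weight-disentanglement decomposition. -/
import Mathlib


open scoped Classical

/-- If `f` satisfies the task arithmetic property around `θ0` w.r.t. task
vectors `τ t` and pairwise disjoint supports `D t` (with admissible coefficient set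
`𝒜 = ℝ^T`), then `f` is weight disentangled w.r.t. `{τ t}` and `{D t}`; explicitly, the
functions `g t x θ' = f x (θ0 + θ') · 1(x ∈ D t)` and
`g0 x = f x θ0 · 1(x ∉ ⋃ t, D t)` realize the weight-disentanglement decomposition. -/
theorem task_arithmetic_implies_weight_disentanglement
    {X : Type*} {m c T : ℕ}
    (f : X → (Fin m → ℝ) → (Fin c → ℝ))
    (θ0 : Fin m → ℝ) (τ : Fin T → (Fin m → ℝ)) (D : Fin T → Set X)
    (hdisj : ∀ t t' : Fin T, t ≠ t' → Disjoint (D t) (D t'))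
    (hTA_in : ∀ α : Fin T → ℝ, ∀ t : Fin T, ∀ x ∈ D t,
      f x (θ0 + ∑ t', α t' • τ t') = f x (θ0 + α t • τ t))
    (hTA_out : ∀ α : Fin T → ℝ, ∀ x ∉ ⋃ t, D t,
      f x (θ0 + ∑ t', α t' • τ t') = f x θ0)
    (g : Fin T → X → (Fin m → ℝ) → (Fin c → ℝ)) (g0 : X → (Fin c → ℝ))
    (hg : g = fun t x θ' => if x ∈ D t then f x (θ0 + θ') else 0)
    (hg0 : g0 = fun x => if x ∈ ⋃ t, D t then 0 else f x θ0) :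
    (∀ α : Fin T → ℝ, ∀ x : X,
      f x (θ0 + ∑ t, α t • τ t) = (∑ t, g t x (α t • τ t)) + g0 x) ∧
    (∀ t : Fin T, ∀ x ∉ D t, ∀ α : ℝ, g t x (α • τ t) = 0) ∧
    (∀ x ∈ ⋃ t, D t, g0 x = 0) := by
  subst hg hg0
  refine ⟨?_, fun t x hx α => by simp [hx], fun x hx => by simp [hx]⟩
  intro α x
  by_cases hx : x ∈ ⋃ t, D t
  · simp only [hx, if_true, add_zero]
    obtain ⟨_, ⟨t0, rfl⟩, hxt0⟩ := hx
    have hsum : (∑ t, if x ∈ D t then f x (θ0 + α t • τ t) else 0)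
        = f x (θ0 + α t0 • τ t0) := by
      rw [Finset.sum_eq_single t0]
      · simp [hxt0]
      · intro t _ ht
        have : x ∉ D t := fun h => (hdisj t t0 ht).le_bot ⟨h, hxt0⟩
        simp [this]
      · simp
    rw [hsum, hTA_in α t0 x hxt0]
  · have hxt : ∀ t, x ∉ D t := fun t h => hx (Set.mem_iUnion.mpr ⟨t, h⟩)
    simp only [hx, if_false, hxt, Finset.sum_const_zero, zero_add]
    exact hTA_out α x hx
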